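/- Assume the quadratic forms t₀ and a on 𝒟 satisfy t₀[f] ≥ κ₀‖f‖², a[f] ≥ α₀‖f‖², and a[f] ≤ C_p·(t₀[f] − κ‖f‖²)^p·(‖f‖²)^{1−p} for all f ∈ 𝒟, where κ₀ ≥ 0, α₀ ≥ 0, κ ≤ κ₀, p ∈ (0, 1), C_p > 0. If λ ∈ ℂ with Im λ ≠ 0 and f ∈ 𝒟 with ‖f‖ = 1 satisfy t₀[f] + 2λ·a[f] + λ² = 0, then Re λ = −a[f] ≤ −α₀, |λ|² = t₀[f] ≥ κ₀, and (Im λ)² ≥ max{0, C_p^{−1/p}·|Re λ|^{1/p} − |Re λ|² + κ}. In particular, W(t) \ ℝ ⊆ {z ∈ ℂ : Re z ≤ −α₀, |z| ≥ √κ₀, (Im z)² ≥ max{0, C_p^{−1/p}|Re z|^{1/p} − |Re z|² + κ}}. -/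

import Mathlib

noncomputable section

/-- Spectral enclosure for the non-real numerical range of the quadratic form pencil
`t(λ) = t₀ + 2λa + λ²` under the `p`-subordination
`a[f] ≤ C_p (t₀[f] − κ‖f‖²)^p (‖f‖²)^{1−p}`: any non-real zero `λ` of `t(·)[f] = 0`
with `‖f‖ = 1` satisfies `Re λ = −a[f] ≤ −α₀`, `|λ|² = t₀[f] ≥ κ₀`, and
`(Im λ)² ≥ max{0, C_p^{−1/p}|Re λ|^{1/p} − |Re λ|² + κ}`; in particular
`W(t) \ ℝ` satisfies the corresponding enclosure. -/
theorem pencil_nonreal_numRange_enclosure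
    {H : Type*} [NormedAddCommGroup H] [InnerProductSpace ℂ H]
    (𝒟 : Submodule ℂ H) (t₀ a : 𝒟 → ℝ)
    (κ₀ α₀ κ p Cp : ℝ)
    (hκ₀ : 0 ≤ κ₀) (hα₀ : 0 ≤ α₀) (hκ : κ ≤ κ₀)
    (hp0 : 0 < p) (hp1 : p < 1) (hCp : 0 < Cp)
    (ht₀ : ∀ f : 𝒟, κ₀ * ‖(f : H)‖ ^ 2 ≤ t₀ f)
    (ha : ∀ f : 𝒟, α₀ * ‖(f : H)‖ ^ 2 ≤ a f)
    (hsub : ∀ f : 𝒟,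
      a f ≤ Cp * (t₀ f - κ * ‖(f : H)‖ ^ 2) ^ p * (‖(f : H)‖ ^ 2) ^ (1 - p)) :
    (∀ l : ℂ, l.im ≠ 0 → ∀ f : 𝒟, ‖(f : H)‖ = 1 →
      (t₀ f : ℂ) + 2 * l * (a f : ℂ) + l ^ 2 = 0 →
      l.re = -(a f) ∧ l.re ≤ -α₀ ∧ ‖l‖ ^ 2 = t₀ f ∧
        κ₀ ≤ ‖l‖ ^ 2 ∧
        max 0 (Cp ^ (-(1 / p)) * |l.re| ^ (1 / p) - |l.re| ^ 2 + κ) ≤ l.im ^ 2) ∧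
    ({l : ℂ | l.im ≠ 0 ∧ ∃ f : 𝒟, ‖(f : H)‖ = 1 ∧
        (t₀ f : ℂ) + 2 * l * (a f : ℂ) + l ^ 2 = 0} ⊆
      {z : ℂ | z.re ≤ -α₀ ∧ Real.sqrt κ₀ ≤ ‖z‖ ∧
        max 0 (Cp ^ (-(1 / p)) * |z.re| ^ (1 / p) - |z.re| ^ 2 + κ) ≤ z.im ^ 2}) := by

  have key : ∀ l : ℂ, l.im ≠ 0 → ∀ f : 𝒟, ‖(f : H)‖ = 1 →
      (t₀ f : ℂ) + 2 * l * (a f : ℂ) + l ^ 2 = 0 →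
      l.re = -(a f) ∧ l.re ≤ -α₀ ∧ ‖l‖ ^ 2 = t₀ f ∧
        κ₀ ≤ ‖l‖ ^ 2 ∧
        max 0 (Cp ^ (-(1 / p)) * |l.re| ^ (1 / p) - |l.re| ^ 2 + κ) ≤ l.im ^ 2 := by
    intro l him f hf heq
    have ht₀f : κ₀ ≤ t₀ f := by have := ht₀ f; rw [hf] at this; simpa using this
    have haf : α₀ ≤ a f := by have := ha f; rw [hf] at this; simpa using this
    have hsubf : a f ≤ Cp * (t₀ f - κ) ^ p := by
      have := hsub f; rw [hf] at this; simpa using this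
    have him' := congrArg Complex.im heq
    have hre' := congrArg Complex.re heq
    simp [Complex.add_im, Complex.add_re, Complex.mul_im, Complex.mul_re, pow_two] at him' hre'
    have hx : l.re = -(a f) := by
      rcases mul_eq_zero.mp (by nlinarith [him'] : (a f + l.re) * (2 * l.im) = 0) with h | h
      · linarith
      · exact absurd (by linarith) him
    have habs : ‖l‖ ^ 2 = t₀ f := by
      rw [Complex.sq_norm, Complex.normSq_apply]
      nlinarith [hre', hx]
    refine ⟨hx, by rw [hx]; linarith, habs, habs ▸ ht₀f, ?_⟩
    have haf0 : 0 ≤ a f := le_trans hα₀ haf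
    have habsx : |l.re| = a f := by rw [hx, abs_neg, abs_of_nonneg haf0]
    have htκ : (0:ℝ) ≤ t₀ f - κ := by linarith
    -- from subordination: (a f)^(1/p) ≤ Cp^(1/p) * (t₀ f - κ)
    have hmain : (a f) ^ (1/p) ≤ Cp ^ (1/p) * (t₀ f - κ) := by
      have h1 : (a f) ^ (1/p) ≤ (Cp * (t₀ f - κ) ^ p) ^ (1/p) :=
        Real.rpow_le_rpow haf0 hsubf (by positivity)
      calc (a f) ^ (1/p) ≤ (Cp * (t₀ f - κ) ^ p) ^ (1/p) := h1
        _ = Cp ^ (1/p) * ((t₀ f - κ) ^ p) ^ (1/p) :=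
            Real.mul_rpow hCp.le (Real.rpow_nonneg htκ p)
        _ = Cp ^ (1/p) * (t₀ f - κ) := by
            rw [← Real.rpow_mul htκ, mul_one_div, div_self hp0.ne', Real.rpow_one]
    have hCpinv : Cp ^ (-(1/p)) * (a f) ^ (1/p) = (a f) ^ (1/p) / Cp ^ (1/p) := by
      rw [Real.rpow_neg hCp.le]; ring
    have hCppos : (0:ℝ) < Cp ^ (1/p) := Real.rpow_pos_of_pos hCp _
    have hdiv : (a f) ^ (1/p) / Cp ^ (1/p) ≤ t₀ f - κ := by
      rw [div_le_iff₀ hCppos]; linarith [hmain]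
    have hyx : l.im ^ 2 = t₀ f - l.re ^ 2 := by
      rw [← habs, Complex.sq_norm, Complex.normSq_apply]; ring
    rw [max_le_iff]
    constructor
    · positivity
    · rw [habsx, hCpinv, hyx, hx]
      nlinarith [hdiv]
  refine ⟨key, ?_⟩
  rintro l ⟨him, f, hf, heq⟩
  obtain ⟨hx, hre, habs, hk, hmax⟩ := key l him f hf heq
  refine ⟨hre, ?_, hmax⟩
  rw [show ‖l‖ = Real.sqrt (‖l‖ ^ 2) by
    rw [Real.sqrt_sq (norm_nonneg l)]]
  exact Real.sqrt_le_sqrt (habs ▸ hk)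


end
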